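/- (Euler integral representation) Let α, β, γ be real numbers with 0 < β < γ, and let λ be real with |λ| < 1. Then the improper integral ∫₁^∞ x^{α−γ} (x−1)^{γ−β−1} (x−λ)^{−α} dx converges and ₂F₁(α, β; γ; λ) = (Γ(γ)/(Γ(β)Γ(γ−β))) · ∫₁^∞ x^{α−γ} (x−1)^{γ−β−1} (x−λ)^{−α} dx. -/

import Mathlib

open Finset MeasureTheory
open Filter Topology intervalIntegral

/-- The Pochhammer symbol `(a)_k = a(a+1)⋯(a+k−1)`. -/
noncomputable def poch (a : ℝ) (k : ℕ) : ℝ := ∏ i ∈ Finset.range k, (a + i)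

/-- The Gauss hypergeometric series `₂F₁(a, b; c; t)`. -/
noncomputable def F21 (a b c t : ℝ) : ℝ :=
  ∑' k : ℕ, poch a k * poch b k / (poch c k * (Nat.factorial k)) * t ^ k

lemma poch_zero (a : ℝ) : poch a 0 = 1 := by simp [poch]

lemma poch_succ (a : ℝ) (k : ℕ) : poch a (k + 1) = poch a k * (a + k) := by
  simp [poch, Finset.prod_range_succ]

lemma poch_pos {a : ℝ} (ha : 0 < a) (k : ℕ) : 0 < poch a k := by
  induction k with
  | zero => simp [poch_zero]
  | succ n ih => rw [poch_succ]; positivity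

lemma abs_poch_le (a : ℝ) (k : ℕ) : |poch a k| ≤ poch (max |a| 1) k := by
  induction k with
  | zero => simp [poch_zero]
  | succ n ih =>
      rw [poch_succ, poch_succ, abs_mul]
      apply mul_le_mul ih ((abs_add_le _ _).trans ?_) (abs_nonneg _)
        (poch_pos (lt_of_lt_of_le one_pos (le_max_right _ _)) n).le
      simp [Nat.abs_cast]

lemma tendsto_ratio_aux (c d : ℝ) :
    Tendsto (fun n : ℕ => ((n:ℝ) + c) / ((n:ℝ) + d)) atTop (𝓝 1) := by
  have h1 : Tendsto (fun n : ℕ => (n:ℝ) + d) atTop atTop :=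
    tendsto_atTop_add_const_right _ d tendsto_natCast_atTop_atTop
  have h2 : Tendsto (fun n : ℕ => (c - d) / ((n:ℝ) + d)) atTop (𝓝 0) :=
    tendsto_const_nhds.div_atTop h1
  have h3 : Tendsto (fun n : ℕ => 1 + (c - d) / ((n:ℝ) + d)) atTop (𝓝 1) := by
    simpa using tendsto_const_nhds.add h2
  apply h3.congr'
  filter_upwards [h1.eventually_gt_atTop 0] with n hn
  field_simp
  ring

-- ratio-test summability
lemma summable_poch_bound (a b : ℝ) (hb : 1 ≤ b) {r : ℝ} (hr0 : 0 < r) (hr : r < 1) :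
    Summable (fun k : ℕ => (|a| + k + 1) * (poch b k / (Nat.factorial k)) * r ^ k) := by
  have hb0 : (0:ℝ) < b := lt_of_lt_of_le one_pos hb
  have hpos : ∀ k : ℕ, 0 < (|a| + k + 1) * (poch b k / (Nat.factorial k)) * r ^ k := by
    intro k
    have := poch_pos hb0 k
    have : (0:ℝ) < (Nat.factorial k) := by positivity
    positivity
  apply summable_of_ratio_test_tendsto_lt_one hr (Eventually.of_forall fun n => (hpos n).ne')
  have lim : Tendsto (fun n : ℕ => (((n:ℝ) + (|a| + 2)) / ((n:ℝ) + (|a| + 1))) *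
      (((n:ℝ) + b) / ((n:ℝ) + 1)) * r) atTop (𝓝 r) := by
    have := ((tendsto_ratio_aux (|a| + 2) (|a| + 1)).mul (tendsto_ratio_aux b 1)).mul_const r
    simpa using this
  apply lim.congr
  intro n
  have h1 : (0:ℝ) < |a| + n + 1 := by positivity
  have h2 : (0:ℝ) < poch b n := poch_pos hb0 n
  have h3 : (0:ℝ) < (Nat.factorial n : ℝ) := by positivity
  rw [Real.norm_of_nonneg (hpos (n+1)).le, Real.norm_of_nonneg (hpos n).le, poch_succ,
    Nat.factorial_succ]
  push_cast
  field_simp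
  ring

lemma summable_of_poch_bound {f : ℕ → ℝ} (a : ℝ) {u : ℝ} (hu : |u| < 1)
    (hf : ∀ k : ℕ, |f k| ≤ (|a| + k + 1) * (poch (max |a| 1) k / (Nat.factorial k))) :
    Summable (fun k : ℕ => f k * u ^ k) := by
  set b := max |a| 1 with hb
  have hb1 : (1:ℝ) ≤ b := le_max_right _ _
  set r := (|u| + 1) / 2 with hrdef
  have hur : |u| ≤ r := by rw [hrdef]; linarith [abs_nonneg u]
  have hr0 : 0 < r := by rw [hrdef]; positivity
  have hr1 : r < 1 := by rw [hrdef]; linarith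
  apply Summable.of_norm
  apply Summable.of_nonneg_of_le (fun k => norm_nonneg _) ?_
    (summable_poch_bound a b hb1 hr0 hr1)
  intro k
  rw [norm_mul, norm_pow, Real.norm_eq_abs, Real.norm_eq_abs]
  have h1 : |u| ^ k ≤ r ^ k := pow_le_pow_left₀ (abs_nonneg u) hur k
  have h2 : (0:ℝ) ≤ (|a| + k + 1) * (poch b k / (Nat.factorial k)) :=
    le_trans (abs_nonneg _) (hf k)
  exact mul_le_mul (hf k) h1 (pow_nonneg (abs_nonneg u) k) h2

lemma abs_c_le (a : ℝ) (k : ℕ) :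
    |poch a k / (Nat.factorial k)| ≤ poch (max |a| 1) k / (Nat.factorial k) := by
  have h3 : (0:ℝ) < (Nat.factorial k : ℝ) := by positivity
  rw [abs_div, abs_of_pos h3]
  gcongr
  exact abs_poch_le a k

lemma one_le_w (a : ℝ) (k : ℕ) : (1:ℝ) ≤ |a| + k + 1 := by
  have h1 := abs_nonneg a
  have h2 : (0:ℝ) ≤ (k:ℝ) := Nat.cast_nonneg k
  linarith

lemma c_nonneg_b (a : ℝ) (k : ℕ) : (0:ℝ) ≤ poch (max |a| 1) k / (Nat.factorial k) := by
  have := poch_pos (lt_of_lt_of_le one_pos (le_max_right |a| 1)) k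
  positivity

lemma bound_c (a : ℝ) (k : ℕ) :
    |poch a k / (Nat.factorial k)| ≤ (|a| + k + 1) * (poch (max |a| 1) k / (Nat.factorial k)) :=
  (abs_c_le a k).trans (le_mul_of_one_le_left (c_nonneg_b a k) (one_le_w a k))

lemma bound_D (a : ℝ) (k : ℕ) :
    |(a + k) * (poch a k / (Nat.factorial k))|
      ≤ (|a| + k + 1) * (poch (max |a| 1) k / (Nat.factorial k)) := by
  rw [abs_mul]
  apply mul_le_mul ?_ (abs_c_le a k) (abs_nonneg _) (by positivity)
  calc |a + (k:ℝ)| ≤ |a| + |(k:ℝ)| := abs_add_le _ _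
    _ ≤ |a| + k + 1 := by rw [Nat.abs_cast]; linarith

lemma bound_h (a : ℝ) (k : ℕ) :
    |(k:ℝ) * (poch a k / (Nat.factorial k))|
      ≤ (|a| + k + 1) * (poch (max |a| 1) k / (Nat.factorial k)) := by
  rw [abs_mul]
  apply mul_le_mul ?_ (abs_c_le a k) (abs_nonneg _) (by positivity)
  rw [Nat.abs_cast]
  have := abs_nonneg a
  linarith

lemma summable_c (a : ℝ) {u : ℝ} (hu : |u| < 1) :
    Summable (fun k : ℕ => poch a k / (Nat.factorial k) * u ^ k) :=
  summable_of_poch_bound a hu (bound_c a)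

lemma summable_D (a : ℝ) {u : ℝ} (hu : |u| < 1) :
    Summable (fun k : ℕ => (a + k) * (poch a k / (Nat.factorial k)) * u ^ k) :=
  summable_of_poch_bound a hu (bound_D a)

lemma summable_h (a : ℝ) {u : ℝ} (hu : |u| < 1) :
    Summable (fun k : ℕ => (k : ℝ) * (poch a k / (Nat.factorial k)) * u ^ k) :=
  summable_of_poch_bound a hu (bound_h a)

-- the key coefficient recurrence
lemma c_rec (a : ℝ) (k : ℕ) :
    ((k:ℝ) + 1) * (poch a (k+1) / (Nat.factorial (k+1))) =
      (a + k) * (poch a k / (Nat.factorial k)) := by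
  have h3 : (0:ℝ) < (Nat.factorial k : ℝ) := by positivity
  rw [poch_succ, Nat.factorial_succ]
  push_cast
  field_simp

section Binomial
variable (a : ℝ)

noncomputable def binF (a : ℝ) (y : ℝ) : ℝ :=
  ∑' k : ℕ, poch a k / (Nat.factorial k) * y ^ k

noncomputable def binD (a : ℝ) (y : ℝ) : ℝ :=
  ∑' k : ℕ, (a + k) * (poch a k / (Nat.factorial k)) * y ^ k

lemma binF_hasDerivAt {y : ℝ} (hy : |y| < 1) :
    HasDerivAt (binF a) (binD a y) y := by
  set r := (|y| + 1) / 2 with hrdef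
  have hyr : |y| < r := by rw [hrdef]; linarith
  have hr0 : 0 < r := by rw [hrdef]; positivity
  have hr1 : r < 1 := by rw [hrdef]; linarith
  set b := max |a| 1 with hb
  have hb1 : (1:ℝ) ≤ b := le_max_right _ _
  have hu : Summable (fun k : ℕ => r⁻¹ * ((|a| + k + 1) * (poch b k / (Nat.factorial k)) * r ^ k)) :=
    (summable_poch_bound a b hb1 hr0 hr1).mul_left _
  have hmem : y ∈ Set.Ioo (-r) r := by
    constructor
    · linarith [neg_abs_le y]
    · linarith [le_abs_self y]
  have h0mem : (0:ℝ) ∈ Set.Ioo (-r) r := by constructor <;> [linarith; exact hr0]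
  have hg : ∀ (k : ℕ) (z : ℝ), z ∈ Set.Ioo (-r) r →
      HasDerivAt (fun z : ℝ => poch a k / (Nat.factorial k) * z ^ k)
        (poch a k / (Nat.factorial k) * ((k:ℝ) * z ^ (k - 1))) z :=
    fun k z _ => (hasDerivAt_pow k z).const_mul _
  have hg' : ∀ (k : ℕ) (z : ℝ), z ∈ Set.Ioo (-r) r →
      ‖poch a k / (Nat.factorial k) * ((k:ℝ) * z ^ (k - 1))‖ ≤
        r⁻¹ * ((|a| + k + 1) * (poch b k / (Nat.factorial k)) * r ^ k) := by
    intro k z hz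
    have hzr : |z| < r := abs_lt.2 ⟨hz.1, hz.2⟩
    rcases Nat.eq_zero_or_pos k with hk | hk
    · subst hk
      simp only [Nat.cast_zero, zero_mul, mul_zero, norm_zero]
      have h1 := c_nonneg_b a 0
      have h2 := one_le_w a 0
      have : (0:ℝ) ≤ poch b 0 / (Nat.factorial 0) := h1
      positivity
    · rw [Real.norm_eq_abs, abs_mul, abs_mul, Nat.abs_cast, abs_pow]
      have h1 : |z| ^ (k-1) ≤ r ^ (k-1) := pow_le_pow_left₀ (abs_nonneg z) hzr.le _
      have hk1 : ((k:ℝ)) ≤ |a| + k + 1 := by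
        have := abs_nonneg a; linarith
      calc |poch a k / (Nat.factorial k)| * ((k:ℝ) * |z| ^ (k-1))
          ≤ (poch b k / (Nat.factorial k)) * ((|a| + k + 1) * r ^ (k-1)) := by
            apply mul_le_mul (abs_c_le a k) ?_ (by positivity) (c_nonneg_b a k)
            exact mul_le_mul hk1 h1 (by positivity) (by positivity)
        _ = r⁻¹ * ((|a| + k + 1) * (poch b k / (Nat.factorial k)) * r ^ k) := by
            rw [show k = (k - 1) + 1 from (Nat.succ_pred_eq_of_pos hk).symm]
            simp only [Nat.add_sub_cancel]
            rw [pow_succ]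
            field_simp
  have hg0 : Summable (fun k : ℕ => poch a k / (Nat.factorial k) * (0:ℝ) ^ k) := by
    apply summable_of_ne_finset_zero (s := ({0} : Finset ℕ))
    intro k hk
    simp only [Finset.mem_singleton] at hk
    rw [zero_pow hk, mul_zero]
  have hder : HasDerivAt (fun z : ℝ => ∑' k : ℕ, poch a k / (Nat.factorial k) * z ^ k)
      (∑' k : ℕ, poch a k / (Nat.factorial k) * ((k:ℝ) * y ^ (k - 1))) y :=
    hasDerivAt_tsum_of_isPreconnected hu isOpen_Ioo (convex_Ioo _ _).isPreconnected
      hg hg' h0mem hg0 hmem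
  have heq : (∑' k : ℕ, poch a k / (Nat.factorial k) * ((k:ℝ) * y ^ (k - 1))) = binD a y := by
    have hsum : Summable (fun k : ℕ => poch a k / (Nat.factorial k) * ((k:ℝ) * y ^ (k - 1))) := by
      rw [← summable_nat_add_iff 1]
      apply Summable.congr (summable_D a hy)
      intro k
      rw [← c_rec a k]
      simp only [Nat.add_sub_cancel]
      push_cast
      ring
    rw [Summable.tsum_eq_zero_add hsum]
    simp only [Nat.cast_zero, zero_mul, mul_zero, zero_add, Nat.add_sub_cancel]
    rw [binD]
    apply tsum_congr
    intro k
    rw [← c_rec a k]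
    push_cast
    ring
  rw [← heq]
  exact hder

lemma binD_identity {y : ℝ} (hy : |y| < 1) : (1 - y) * binD a y = a * binF a y := by
  have hsD := summable_D a hy
  have hsc := summable_c a hy
  have hsh := summable_h a hy
  have h1 : y * binD a y = ∑' k : ℕ, (k:ℝ) * (poch a k / (Nat.factorial k)) * y ^ k := by
    rw [binD, ← tsum_mul_left]
    have hshift : ∀ k : ℕ, y * ((a + k) * (poch a k / (Nat.factorial k)) * y ^ k) =
        (fun j : ℕ => (j:ℝ) * (poch a j / (Nat.factorial j)) * y ^ j) (k + 1) := by
      intro k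
      simp only
      rw [← c_rec a k, pow_succ]
      push_cast
      ring
    rw [tsum_congr hshift, Summable.tsum_eq_zero_add hsh]
    simp
  have h2 : binD a y = a * binF a y + ∑' k : ℕ, (k:ℝ) * (poch a k / (Nat.factorial k)) * y ^ k := by
    rw [binD, binF, ← tsum_mul_left, ← Summable.tsum_add (hsc.mul_left a) hsh]
    apply tsum_congr
    intro k
    ring
  have h3 : (1 - y) * binD a y = binD a y - y * binD a y := by ring
  rw [h3, h1, h2]
  ring

theorem hasSum_binomial {u : ℝ} (hu : |u| < 1) :
    HasSum (fun k : ℕ => poch a k / (Nat.factorial k) * u ^ k) ((1 - u) ^ (-a) : ℝ) := by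
  have h1u : 0 < 1 - u := by have := abs_lt.1 hu; linarith [this.2]
  have hΦ : ∀ y ∈ Set.Ioo (-1:ℝ) 1, HasDerivAt (fun z => binF a z * (1 - z) ^ a) 0 y := by
    intro y hy
    have hy' : |y| < 1 := abs_lt.2 ⟨hy.1, hy.2⟩
    have h1y : 0 < 1 - y := by linarith [hy.2]
    have hF := binF_hasDerivAt a hy'
    have hsub : HasDerivAt (fun z : ℝ => 1 - z) (-1) y := by
      simpa using (hasDerivAt_id y).const_sub 1
    have hG : HasDerivAt (fun z : ℝ => (1 - z) ^ a) (a * (1 - y) ^ (a - 1) * (-1)) y :=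
      (Real.hasDerivAt_rpow_const (Or.inl h1y.ne')).comp y hsub
    have hprod := hF.mul hG
    convert hprod using 1
    case e'_4 => rfl
    case e'_5 => rfl
    case e'_8 => rfl
    have hpow : (1 - y) ^ a = (1 - y) ^ (a - 1) * (1 - y) := by
      rw [← Real.rpow_add_one h1y.ne' (a-1)]
      ring_nf
    have hid := binD_identity a hy'
    rw [hpow]
    linear_combination (-(1 - y) ^ (a-1)) * hid
  have hconst : binF a u * (1 - u) ^ a = binF a 0 * (1 - 0) ^ a := by
    have humem : u ∈ Set.Ioo (-1:ℝ) 1 := ⟨(abs_lt.1 hu).1, (abs_lt.1 hu).2⟩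
    have h0mem : (0:ℝ) ∈ Set.Ioo (-1:ℝ) 1 := by norm_num
    apply Convex.is_const_of_fderivWithin_eq_zero (𝕜 := ℝ) (convex_Ioo (-1:ℝ) 1)
      (f := fun z : ℝ => binF a z * (1 - z) ^ a) ?_ ?_ humem h0mem
    · intro z hz
      exact ((hΦ z hz).differentiableAt).differentiableWithinAt
    · intro z hz
      rw [fderivWithin_of_isOpen isOpen_Ioo hz,
        ((hasDerivAt_iff_hasFDerivAt).1 (hΦ z hz)).fderiv]
      apply ContinuousLinearMap.ext
      intro w
      simp
  have hF0 : binF a 0 = 1 := by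
    rw [binF, tsum_eq_single 0 (by intro k hk; rw [zero_pow hk, mul_zero])]
    simp [poch_zero]
  rw [hF0] at hconst
  norm_num at hconst
  have hval : binF a u = (1 - u) ^ (-a) := by
    rw [Real.rpow_neg h1u.le]
    exact eq_inv_of_mul_eq_one_left (by linear_combination hconst)
  have hs := (summable_c a hu).hasSum
  rw [show (∑' k : ℕ, poch a k / (Nat.factorial k) * u ^ k) = binF a u from rfl, hval] at hs
  exact hs

end Binomial

lemma Gamma_poch {a : ℝ} (ha : 0 < a) (k : ℕ) :
    Real.Gamma (a + k) = poch a k * Real.Gamma a := by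
  induction k with
  | zero => simp [poch_zero]
  | succ n ih =>
      have hne : a + n ≠ 0 := by positivity
      have : a + (n + 1 : ℕ) = (a + n) + 1 := by push_cast; ring
      rw [this, Real.Gamma_add_one hne, ih, poch_succ]
      ring

lemma beta_eqOn : ∀ b c : ℝ, ∀ x ∈ Set.Icc (0:ℝ) 1,
    ((x:ℂ) ^ ((b:ℂ) - 1) * (1 - (x:ℂ)) ^ ((c:ℂ) - 1)) =
      ((x ^ (b-1) * (1-x) ^ (c-1) : ℝ) : ℂ) := by
  intro b c x hx
  rw [Complex.ofReal_mul, Complex.ofReal_cpow hx.1, Complex.ofReal_cpow (by linarith [hx.2])]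
  push_cast
  ring

lemma beta_integrableOn {b c : ℝ} (hb : 0 < b) (hc : 0 < c) :
    IntegrableOn (fun t : ℝ => t ^ (b-1) * (1-t) ^ (c-1)) (Set.Ioo 0 1) := by
  have hcomplex := Complex.betaIntegral_convergent (u := (b:ℂ)) (v := (c:ℂ))
    (by simpa using hb) (by simpa using hc)
  rw [intervalIntegrable_iff_integrableOn_Ioc_of_le zero_le_one] at hcomplex
  have hre : IntegrableOn (fun x : ℝ =>
      (((x:ℂ) ^ ((b:ℂ) - 1) * (1 - (x:ℂ)) ^ ((c:ℂ) - 1)).re)) (Set.Ioc 0 1) := hcomplex.re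
  apply (hre.congr_fun ?_ measurableSet_Ioc).mono_set Set.Ioo_subset_Ioc_self
  intro x hx
  show ((x:ℂ) ^ ((b:ℂ) - 1) * (1 - (x:ℂ)) ^ ((c:ℂ) - 1)).re = _
  rw [beta_eqOn b c x ⟨hx.1.le, hx.2⟩, Complex.ofReal_re]

lemma real_beta {b c : ℝ} (hb : 0 < b) (hc : 0 < c) :
    ∫ t in Set.Ioo (0:ℝ) 1, t ^ (b-1) * (1-t) ^ (c-1) =
      Real.Gamma b * Real.Gamma c / Real.Gamma (b+c) := by
  have hgam := Complex.Gamma_mul_Gamma_eq_betaIntegral (s := (b:ℂ)) (t := (c:ℂ))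
    (by simpa using hb) (by simpa using hc)
  have hbeta : Complex.betaIntegral (b:ℂ) (c:ℂ) =
      ((∫ t in (0:ℝ)..1, t ^ (b-1) * (1-t) ^ (c-1) : ℝ) : ℂ) := by
    rw [Complex.betaIntegral, ← intervalIntegral.integral_ofReal]
    apply intervalIntegral.integral_congr
    intro x hx
    have hx' : x ∈ Set.Icc (0:ℝ) 1 := by
      rwa [Set.uIcc_of_le zero_le_one] at hx
    exact beta_eqOn b c x hx'
  rw [hbeta, ← Complex.ofReal_add, Complex.Gamma_ofReal, Complex.Gamma_ofReal,
    Complex.Gamma_ofReal, ← Complex.ofReal_mul, ← Complex.ofReal_mul] at hgam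
  have := Complex.ofReal_injective hgam
  have hG : Real.Gamma (b+c) ≠ 0 := (Real.Gamma_pos_of_pos (by linarith)).ne'
  have hI : ∫ t in (0:ℝ)..1, t ^ (b-1) * (1-t) ^ (c-1) =
      Real.Gamma b * Real.Gamma c / Real.Gamma (b+c) := by
    field_simp
    linarith [this]
  rw [← hI, intervalIntegral.integral_of_le zero_le_one,
    ← integral_Ioc_eq_integral_Ioo]

/-- Euler integral representation: for `0 < β < γ` and `|λ| < 1`, the integral
`∫₁^∞ x^{α−γ}(x−1)^{γ−β−1}(x−λ)^{−α} dx` converges and equals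
`(Γ(β)Γ(γ−β)/Γ(γ)) · ₂F₁(α, β; γ; λ)`. -/
theorem euler_integral_representation (α β γ lam : ℝ)
    (hβ : 0 < β) (hβγ : β < γ) (hlam : |lam| < 1) :
    IntegrableOn
        (fun x : ℝ => x ^ (α - γ) * (x - 1) ^ (γ - β - 1) * (x - lam) ^ (-α)) (Set.Ioi 1) ∧
      F21 α β γ lam =
        (Real.Gamma γ / (Real.Gamma β * Real.Gamma (γ - β))) *
          ∫ x in Set.Ioi (1 : ℝ),
            x ^ (α - γ) * (x - 1) ^ (γ - β - 1) * (x - lam) ^ (-α) := by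
  have hγβ : 0 < γ - β := by linarith
  have hγ : 0 < γ := by linarith
  set g : ℝ → ℝ := fun x => x ^ (α - γ) * (x - 1) ^ (γ - β - 1) * (x - lam) ^ (-α) with hg
  set W : ℝ → ℝ := fun t => t ^ (β - 1) * (1 - t) ^ (γ - β - 1) * (1 - lam * t) ^ (-α) with hW
  -- basic facts about t ∈ Ioo 0 1
  have hlamt : ∀ t ∈ Set.Ioo (0:ℝ) 1, |lam * t| < 1 := by
    intro t ht
    rw [abs_mul]
    calc |lam| * |t| ≤ |lam| * 1 := by
          apply mul_le_mul_of_nonneg_left ?_ (abs_nonneg lam)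
          rw [abs_of_pos ht.1]; exact ht.2.le
      _ < 1 := by simpa using hlam
  have h1lamt : ∀ t ∈ Set.Ioo (0:ℝ) 1, 0 < 1 - lam * t := by
    intro t ht
    have := hlamt t ht
    have := abs_lt.1 this
    linarith [this.2]
  -- substitution setup
  have hder : ∀ x ∈ Set.Ioo (0:ℝ) 1, HasDerivWithinAt (fun x : ℝ => x⁻¹)
      (-((x:ℝ)^2)⁻¹) (Set.Ioo 0 1) x :=
    fun x hx => (hasDerivAt_inv hx.1.ne').hasDerivWithinAt
  have hinj : Set.InjOn (fun x : ℝ => x⁻¹) (Set.Ioo 0 1) := inv_injective.injOn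
  have himg : (fun x : ℝ => x⁻¹) '' Set.Ioo 0 1 = Set.Ioi 1 := by
    ext y
    constructor
    · rintro ⟨t, ht, rfl⟩
      exact Set.mem_Ioi.2 ((one_lt_inv₀ ht.1).2 ht.2)
    · intro hy
      rw [Set.mem_Ioi] at hy
      have hy0 : 0 < y := lt_trans one_pos hy
      exact ⟨y⁻¹, ⟨inv_pos.2 hy0, inv_lt_one_of_one_lt₀ hy⟩, inv_inv y⟩
  -- the pointwise substitution identity
  have hpt : ∀ t ∈ Set.Ioo (0:ℝ) 1, |(-((t:ℝ)^2)⁻¹)| • g t⁻¹ = W t := by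
    intro t ht
    obtain ⟨ht0, ht1⟩ := ht
    have h1t : (0:ℝ) < 1 - t := by linarith
    have hml := h1lamt t ⟨ht0, ht1⟩
    have e1 : t⁻¹ - 1 = (1 - t)/t := by field_simp
    have e2 : t⁻¹ - lam = (1 - lam * t)/t := by field_simp
    have habs : |(-((t:ℝ)^2)⁻¹)| = ((t:ℝ)^2)⁻¹ := by
      rw [abs_neg, abs_inv, abs_of_pos (by positivity : (0:ℝ) < t^2)]
    rw [habs, smul_eq_mul, hg, hW]
    simp only
    rw [e1, e2]
    have hb3 : (0:ℝ) < (1-t)/t := div_pos h1t ht0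
    have hb4 : (0:ℝ) < (1-lam*t)/t := div_pos hml ht0
    have h2 : ((t:ℝ)^2)⁻¹ = Real.exp (Real.log t * (-2)) := by
      rw [← Real.rpow_def_of_pos ht0, ← Real.rpow_natCast t 2, ← Real.rpow_neg ht0.le]
      norm_num
    rw [h2, Real.rpow_def_of_pos (inv_pos.2 ht0), Real.rpow_def_of_pos hb3,
      Real.rpow_def_of_pos hb4, Real.rpow_def_of_pos ht0, Real.rpow_def_of_pos h1t,
      Real.rpow_def_of_pos hml, Real.log_inv, Real.log_div h1t.ne' ht0.ne',
      Real.log_div hml.ne' ht0.ne']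
    rw [← Real.exp_add, ← Real.exp_add, ← Real.exp_add, ← Real.exp_add, ← Real.exp_add,
      Real.exp_eq_exp]
    ring
  -- integrability of W on Ioo 0 1
  have hWcont : ContinuousOn W (Set.Ioo 0 1) := by
    apply ContinuousOn.mul
    apply ContinuousOn.mul
    · exact continuousOn_id.rpow_const (fun t ht => Or.inl ht.1.ne')
    · exact (continuousOn_const.sub continuousOn_id).rpow_const
        (fun t ht => Or.inl (by intro h; simp only [Pi.sub_apply, id] at h; nlinarith [ht.2]))
    · exact (continuousOn_const.sub (continuousOn_const.mul continuousOn_id)).rpow_const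
        (fun t ht => Or.inl (h1lamt t ht).ne')
  have hM : ∀ t ∈ Set.Ioo (0:ℝ) 1,
      (1 - lam * t) ^ (-α) ≤ max ((1 - |lam|) ^ (-α)) ((2:ℝ) ^ (-α)) := by
    intro t ht
    have hml := h1lamt t ht
    have hge : 1 - |lam| ≤ 1 - lam * t := by
      have h1 := (abs_lt.1 (hlamt t ht)).1
      have h2 : -(lam * t) ≤ |lam * t| := neg_le_abs _
      have : |lam * t| ≤ |lam| := by
        rw [abs_mul]
        calc |lam| * |t| ≤ |lam| * 1 := by
              apply mul_le_mul_of_nonneg_left ?_ (abs_nonneg lam)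
              rw [abs_of_pos ht.1]; exact ht.2.le
          _ = |lam| := mul_one _
      linarith [le_abs_self (lam * t)]
    have hle2 : 1 - lam * t ≤ 2 := by
      have := (abs_lt.1 (hlamt t ht)).1
      linarith
    rcases le_or_gt 0 (-α) with hα | hα
    · exact le_max_of_le_right (Real.rpow_le_rpow (by linarith) hle2 hα)
    · apply le_max_of_le_left
      apply Real.rpow_le_rpow_of_nonpos (by linarith [abs_nonneg lam, hlam]) hge hα.le
  have hWint : IntegrableOn W (Set.Ioo 0 1) := by
    set M := max ((1 - |lam|) ^ (-α)) ((2:ℝ) ^ (-α)) with hMdef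
    apply Integrable.mono' (((beta_integrableOn hβ hγβ).const_mul M))
      (hWcont.aestronglyMeasurable measurableSet_Ioo)
    rw [ae_restrict_iff' measurableSet_Ioo]
    apply Filter.Eventually.of_forall
    intro t ht
    have ht0 := ht.1
    have h1t : (0:ℝ) < 1 - t := by linarith [ht.2]
    have hml := h1lamt t ht
    have hWnn : 0 ≤ t ^ (β - 1) * (1 - t) ^ (γ - β - 1) := by positivity
    rw [hW, Real.norm_eq_abs]
    simp only
    rw [abs_of_nonneg (by positivity)]
    calc t ^ (β - 1) * (1 - t) ^ (γ - β - 1) * (1 - lam * t) ^ (-α)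
        ≤ t ^ (β - 1) * (1 - t) ^ (γ - β - 1) * M := by
          apply mul_le_mul_of_nonneg_left (hM t ht) hWnn
      _ = M * (t ^ (β - 1) * (1 - t) ^ (γ - β - 1)) := by ring
  -- Part 1 : integrability of g on Ioi 1
  have hint : IntegrableOn g (Set.Ioi 1) := by
    rw [← himg, integrableOn_image_iff_integrableOn_abs_deriv_smul measurableSet_Ioo hder hinj]
    exact hWint.congr_fun (fun t ht => (hpt t ht).symm) measurableSet_Ioo
  -- integral over Ioi 1 equals integral of W over Ioo 0 1
  have hsubs : ∫ x in Set.Ioi (1:ℝ), g x = ∫ t in Set.Ioo (0:ℝ) 1, W t := by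
    rw [← himg, integral_image_eq_integral_abs_deriv_smul measurableSet_Ioo hder hinj]
    exact setIntegral_congr_fun measurableSet_Ioo hpt
  refine ⟨hint, ?_⟩
  -- series expansion
  set c : ℕ → ℝ := fun k => poch α k / (Nat.factorial k) with hc
  set Fk : ℕ → ℝ → ℝ := fun k t =>
    (c k * lam ^ k) * (t ^ ((β + k) - 1) * (1 - t) ^ ((γ - β) - 1)) with hFk
  have hFk_int : ∀ k : ℕ, IntegrableOn (Fk k) (Set.Ioo 0 1) := by
    intro k
    have : (0:ℝ) < β + k := by positivity
    exact (beta_integrableOn this hγβ).const_mul _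
  have hWeq : ∀ t ∈ Set.Ioo (0:ℝ) 1, (∑' k : ℕ, Fk k t) = W t := by
    intro t ht
    have hsum := (hasSum_binomial α (hlamt t ht)).mul_right
      (t ^ (β - 1) * (1 - t) ^ (γ - β - 1))
    have hterm : ∀ k : ℕ, (poch α k / (Nat.factorial k) * (lam * t) ^ k) *
        (t ^ (β - 1) * (1 - t) ^ (γ - β - 1)) = Fk k t := by
      intro k
      rw [hFk]
      simp only
      rw [mul_pow, show (β + (k:ℝ)) - 1 = (β - 1) + (k:ℝ) by ring,
        Real.rpow_add ht.1, Real.rpow_natCast, show (γ - β) - 1 = γ - β - 1 by ring]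
      ring
    rw [← tsum_congr hterm, hsum.tsum_eq, hW]
    simp only
    ring
  -- summability of the integral norms
  have habs_c : Summable (fun k : ℕ => |c k| * |lam| ^ k) := by
    apply summable_of_poch_bound α (by rwa [abs_abs])
    intro k
    rw [abs_abs]
    exact bound_c α k
  have hB0 : ∀ k : ℕ, ∫ t in Set.Ioo (0:ℝ) 1, ‖Fk k t‖ ≤
      |c k| * |lam| ^ k * (Real.Gamma β * Real.Gamma (γ - β) / Real.Gamma γ) := by
    intro k
    have hβk : (0:ℝ) < β + k := by positivity
    have hle : ∀ t ∈ Set.Ioo (0:ℝ) 1,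
        ‖Fk k t‖ ≤ |c k| * |lam| ^ k * (t ^ (β - 1) * (1 - t) ^ ((γ - β) - 1)) := by
      intro t ht
      have ht0 := ht.1
      have h1t : (0:ℝ) < 1 - t := by linarith [ht.2]
      rw [hFk, Real.norm_eq_abs]
      simp only
      rw [abs_mul, abs_mul, abs_mul, abs_pow, abs_of_nonneg (Real.rpow_nonneg ht0.le _),
        abs_of_nonneg (Real.rpow_nonneg h1t.le _)]
      have hpow : t ^ ((β + (k:ℝ)) - 1) ≤ t ^ (β - 1) := by
        apply Real.rpow_le_rpow_of_exponent_ge ht0 ht.2.le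
        have : (0:ℝ) ≤ (k:ℝ) := Nat.cast_nonneg k
        linarith
      gcongr
    calc ∫ t in Set.Ioo (0:ℝ) 1, ‖Fk k t‖
        ≤ ∫ t in Set.Ioo (0:ℝ) 1, |c k| * |lam| ^ k * (t ^ (β - 1) * (1 - t) ^ ((γ - β) - 1)) := by
          apply setIntegral_mono_on (hFk_int k).norm
            (((beta_integrableOn hβ hγβ).const_mul _)) measurableSet_Ioo hle
      _ = |c k| * |lam| ^ k * (Real.Gamma β * Real.Gamma (γ - β) / Real.Gamma γ) := by
          rw [MeasureTheory.integral_const_mul, real_beta hβ hγβ, show β + (γ - β) = γ by ring]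
  have hnorm_sum : Summable (fun k : ℕ => ∫ t in Set.Ioo (0:ℝ) 1, ‖Fk k t‖) := by
    apply Summable.of_nonneg_of_le (fun k => integral_nonneg (fun t => norm_nonneg _)) hB0
    exact habs_c.mul_right _
  -- exchange sum and integral
  have hexch : (∑' k : ℕ, ∫ t in Set.Ioo (0:ℝ) 1, Fk k t) = ∫ t in Set.Ioo (0:ℝ) 1, W t := by
    rw [MeasureTheory.integral_tsum_of_summable_integral_norm hFk_int hnorm_sum]
    exact setIntegral_congr_fun measurableSet_Ioo hWeq
  -- compute each integral
  have hFk_val : ∀ k : ℕ, (∫ t in Set.Ioo (0:ℝ) 1, Fk k t) =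
      c k * lam ^ k * (Real.Gamma (β + k) * Real.Gamma (γ - β) / Real.Gamma (γ + k)) := by
    intro k
    have hβk : (0:ℝ) < β + k := by positivity
    rw [hFk]
    simp only
    rw [MeasureTheory.integral_const_mul, real_beta hβk hγβ, show (β + (k:ℝ)) + (γ - β) = γ + k by ring]
  -- final assembly
  rw [hsubs, ← hexch, ← tsum_mul_left]
  rw [F21]
  apply tsum_congr
  intro k
  rw [hFk_val k, Gamma_poch hβ k, Gamma_poch hγ k, hc]
  have hΓβ : (0:ℝ) < Real.Gamma β := Real.Gamma_pos_of_pos hβ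
  have hΓγ : (0:ℝ) < Real.Gamma γ := Real.Gamma_pos_of_pos hγ
  have hΓγβ : (0:ℝ) < Real.Gamma (γ - β) := Real.Gamma_pos_of_pos hγβ
  have hpγ : (0:ℝ) < poch γ k := poch_pos hγ k
  have hfac : (0:ℝ) < (Nat.factorial k : ℝ) := by positivity
  field_simp
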